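/- arXiv:1911.04725 — 2 statements merged into one kernel-verified Lean document; each statement's English description precedes it below -/
import Mathlib

section
/- (Key step in universal denominator proof) Let q ∈ K not be a root of unity and m a positive integer. Suppose h ∈ K[x] is a monic polynomial with h(0) ≠ 0, and A, B ∈ K[x] satisfy gcd(A(x), B(q^{sm}x)) = 1 for all s ∈ ℕ. If h(x) divides B(x)·h(q^m x) and h(q^m x) divides A(x)·h(x) in K[x], then h = 1. -/
open Polynomial

lemma comp_scale_scale {K : Type*} [Field K] (p : Polynomial K) (a b : K) :
    (p.comp (C a * X)).comp (C b * X) = p.comp (C (a * b) * X) := by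
  rw [Polynomial.comp_assoc]
  congr 1
  rw [mul_comp, C_comp, X_comp, ← mul_assoc, ← C_mul]

lemma dvd_comp_scale {K : Type*} [Field K] {p q : Polynomial K} (c : K) (hpq : p ∣ q) :
    p.comp (C c * X) ∣ q.comp (C c * X) := by
  obtain ⟨d, rfl⟩ := hpq
  exact ⟨d.comp (C c * X), by rw [mul_comp]⟩

lemma isCoprime_comp_scale {K : Type*} [Field K] {p q : Polynomial K} (c : K)
    (hpq : IsCoprime p q) : IsCoprime (p.comp (C c * X)) (q.comp (C c * X)) := by
  obtain ⟨u, v, huv⟩ := hpq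
  exact ⟨u.comp (C c * X), v.comp (C c * X), by
    rw [← mul_comp, ← mul_comp, ← add_comp, huv, one_comp]⟩

lemma exists_common_root {L : Type*} [Field L] [IsAlgClosed L] {p q : Polynomial L}
    (hp : p ≠ 0) (h : ¬IsCoprime p q) : ∃ z, p.eval z = 0 ∧ q.eval z = 0 := by
  classical
  have hu : ¬IsUnit (EuclideanDomain.gcd p q) := by
    rwa [EuclideanDomain.gcd_isUnit_iff]
  have hg0 : EuclideanDomain.gcd p q ≠ 0 := by
    intro H
    exact hp (EuclideanDomain.gcd_eq_zero_iff.mp H).1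
  obtain ⟨z, hz⟩ := IsAlgClosed.exists_root _ (degree_pos_of_ne_zero_of_nonunit hg0 hu).ne'
  exact ⟨z, eval_eq_zero_of_dvd_of_eval_eq_zero (EuclideanDomain.gcd_dvd_left p q) hz,
    eval_eq_zero_of_dvd_of_eval_eq_zero (EuclideanDomain.gcd_dvd_right p q) hz⟩

lemma exists_coprime_comp {K : Type*} [Field K] (h : Polynomial K) (hne : h ≠ 0)
    (h0 : h.eval 0 ≠ 0) (c : K) (hc0 : c ≠ 0) (hc : ∀ k : ℕ, k ≠ 0 → c ^ k ≠ 1) :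
    ∃ N : ℕ, IsCoprime h (h.comp (C (c ^ (N + 1)) * X)) := by
  by_contra hcon
  push_neg at hcon
  set L := AlgebraicClosure K with hL
  set φ : K →+* L := algebraMap K L with hφ
  have hφinj : Function.Injective φ := φ.injective
  have hmapne : h.map φ ≠ 0 := (Polynomial.map_ne_zero_iff hφinj).mpr hne
  have key : ∀ N : ℕ, ∃ z : L, (h.map φ).eval z = 0 ∧ (h.map φ).eval ((φ c) ^ (N + 1) * z) = 0 := by
    intro N
    have h1 : ¬ IsCoprime (h.map φ) ((h.comp (C (c ^ (N + 1)) * X)).map φ) := fun hco =>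
      hcon N ((Polynomial.isCoprime_map φ).mp hco)
    have h2 : (h.comp (C (c ^ (N + 1)) * X)).map φ
        = (h.map φ).comp (C ((φ c) ^ (N + 1)) * X) := by
      rw [Polynomial.map_comp]
      simp
    rw [h2] at h1
    obtain ⟨z, hz1, hz2⟩ := exists_common_root hmapne h1
    refine ⟨z, hz1, ?_⟩
    rwa [eval_comp, eval_mul, eval_C, eval_X] at hz2
  choose z hz1 hz2 using key
  classical
  set S := (h.map φ).roots.toFinset with hS
  have mem1 : ∀ N, z N ∈ S := fun N =>
    Multiset.mem_toFinset.mpr (mem_roots'.mpr ⟨hmapne, hz1 N⟩)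
  have mem2 : ∀ N, (φ c) ^ (N + 1) * z N ∈ S := fun N =>
    Multiset.mem_toFinset.mpr (mem_roots'.mpr ⟨hmapne, hz2 N⟩)
  have zne : ∀ N, z N ≠ 0 := by
    intro N hz0
    apply h0
    apply hφinj
    have hthis := hz1 N
    rw [hz0, eval_map, eval₂_at_zero] at hthis
    rw [map_zero, ← coeff_zero_eq_eval_zero]
    exact hthis
  set f : ℕ → S × S := fun N => (⟨z N, mem1 N⟩, ⟨(φ c) ^ (N + 1) * z N, mem2 N⟩) with hf
  obtain ⟨N, N', hNN, heq⟩ := Finite.exists_ne_map_eq_of_infinite f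
  have e1 : z N = z N' := congrArg (fun p => (p.1 : L)) heq
  have e2 : (φ c) ^ (N + 1) * z N = (φ c) ^ (N' + 1) * z N' := congrArg (fun p => (p.2 : L)) heq
  rw [← e1] at e2
  have E : (φ c) ^ (N + 1) = (φ c) ^ (N' + 1) := mul_right_cancel₀ (zne N) e2
  have main : ∀ a b : ℕ, a < b → (φ c) ^ (a + 1) = (φ c) ^ (b + 1) → False := by
    intro a b hab hE
    have hb : b + 1 = (a + 1) + (b - a) := by omega
    have hc' : (φ c) ^ (a + 1) ≠ 0 := pow_ne_zero _ (by simpa using hc0)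
    have h1 : (φ c) ^ (a + 1) * 1 = (φ c) ^ (a + 1) * (φ c) ^ (b - a) := by
      rw [mul_one, ← pow_add, ← hb, hE]
    have h2 : (φ c) ^ (b - a) = 1 := (mul_left_cancel₀ hc' h1).symm
    have h3 : c ^ (b - a) = 1 := by
      apply hφinj
      rw [map_pow, map_one]
      exact h2
    exact hc (b - a) (by omega) h3
  rcases hNN.lt_or_gt with hlt | hlt
  · exact main N N' hlt E
  · exact main N' N hlt E.symm

theorem stmt13 {K : Type*} [Field K] [CharZero K] (q : K) (hq : q ≠ 0)
    (hroot : ∀ ℓ : ℤ, ℓ ≠ 0 → q ^ ℓ ≠ 1)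
    (m : ℕ) (hm : 0 < m) (h A B : Polynomial K)
    (hmonic : h.Monic) (h0 : h.eval 0 ≠ 0)
    (hcop : ∀ s : ℕ, IsCoprime A (B.comp (C (q ^ (s * m)) * X)))
    (hd1 : h ∣ B * h.comp (C (q ^ m) * X))
    (hd2 : h.comp (C (q ^ m) * X) ∣ A * h) :
    h = 1 := by
  have hqm0 : q ^ m ≠ 0 := pow_ne_zero _ hq
  set r := (q ^ m)⁻¹ with hr
  have hr0 : r ≠ 0 := inv_ne_zero hqm0
  have hc1 : ∀ k : ℕ, k ≠ 0 → (q ^ m) ^ k ≠ 1 := by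
    intro k hk h1
    apply hroot (m * k : ℕ) (by exact_mod_cast Nat.mul_ne_zero hm.ne' hk)
    rw [zpow_natCast, pow_mul]
    exact h1
  have hc2 : ∀ k : ℕ, k ≠ 0 → r ^ k ≠ 1 := by
    intro k hk h1
    apply hc1 k hk
    rw [hr, inv_pow, inv_eq_one] at h1
    exact h1
  -- iteration lemma for B
  have L1 : ∀ N : ℕ, h ∣ (∏ s ∈ Finset.range N, B.comp (C (q ^ (s * m)) * X)) *
      h.comp (C (q ^ (N * m)) * X) := by
    intro N
    induction N with
    | zero => simp
    | succ N ih =>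
      have step := dvd_comp_scale (q ^ (N * m)) hd1
      rw [mul_comp, comp_scale_scale] at step
      have e : q ^ m * q ^ (N * m) = q ^ ((N + 1) * m) := by
        rw [← pow_add]; congr 1; ring
      rw [e] at step
      refine ((ih.trans (mul_dvd_mul_left _ step)).trans (dvd_of_eq ?_))
      rw [Finset.prod_range_succ]; ring
  -- iteration lemma for A
  have L2 : ∀ M : ℕ, h ∣ (∏ s ∈ Finset.range M, A.comp (C (r ^ (s + 1)) * X)) *
      h.comp (C (r ^ M) * X) := by
    intro M
    induction M with
    | zero => simp
    | succ M ih =>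
      have step := dvd_comp_scale (r ^ (M + 1)) hd2
      rw [mul_comp, comp_scale_scale] at step
      have e : q ^ m * r ^ (M + 1) = r ^ M := by
        rw [hr, pow_succ, ← mul_assoc, mul_comm (q ^ m), mul_assoc,
          mul_inv_cancel₀ hqm0, mul_one]
      rw [e] at step
      refine ((ih.trans (mul_dvd_mul_left _ step)).trans (dvd_of_eq ?_))
      rw [Finset.prod_range_succ]; ring
  obtain ⟨N, hN⟩ := exists_coprime_comp h hmonic.ne_zero h0 (q ^ m) hqm0 hc1
  have e1 : (q ^ m) ^ (N + 1) = q ^ ((N + 1) * m) := by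
    rw [← pow_mul]; congr 1; ring
  rw [e1] at hN
  have hB : h ∣ ∏ s ∈ Finset.range (N + 1), B.comp (C (q ^ (s * m)) * X) :=
    hN.dvd_of_dvd_mul_right (L1 (N + 1))
  obtain ⟨M, hM⟩ := exists_coprime_comp h hmonic.ne_zero h0 r hr0 hc2
  have hA : h ∣ ∏ s ∈ Finset.range (M + 1), A.comp (C (r ^ (s + 1)) * X) :=
    hM.dvd_of_dvd_mul_right (L2 (M + 1))
  by_contra hne1
  have hnu : ¬IsUnit h := fun hu => hne1 (hmonic.isUnit_iff.mp hu)
  obtain ⟨p, hp_irr, hp_dvd⟩ := WfDvdMonoid.exists_irreducible_factor hnu hmonic.ne_zero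
  have hp_prime : Prime p := UniqueFactorizationMonoid.irreducible_iff_prime.mp hp_irr
  obtain ⟨s0, hs0mem, hs0⟩ := hp_prime.exists_mem_finset_dvd (hp_dvd.trans hB)
  obtain ⟨t, htmem, ht⟩ := hp_prime.exists_mem_finset_dvd (hp_dvd.trans hA)
  have hco := isCoprime_comp_scale (r ^ (t + 1)) (hcop (s0 + t + 1))
  rw [comp_scale_scale] at hco
  have e2 : q ^ ((s0 + t + 1) * m) * r ^ (t + 1) = q ^ (s0 * m) := by
    rw [show (s0 + t + 1) * m = s0 * m + m * (t + 1) from by ring, pow_add, hr, inv_pow,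
      ← pow_mul, mul_assoc, mul_inv_cancel₀ (pow_ne_zero _ hq), mul_one]
  rw [e2] at hco
  exact hp_irr.not_isUnit (hco.isUnit_of_dvd' ht hs0)
end

section
/- (Degree bound for solutions, upper bound) Let A, B, C ∈ K[x] be nonzero with leading terms a_{ℓ1}x^{ℓ1}, b_{ℓ1}x^{ℓ1}, c_{ℓ2}x^{ℓ2} respectively, where b_{ℓ1} = a_{ℓ1}·q^{m(ℓ0+ℓ2)}, and let a(x,y) ∈ K[x,y] with deg_x(a) = ℓ3 and deg_y(a) < λ. Suppose p̂(x,y) ∈ K[x, x^{-1}][y] with deg_y(p̂) < λ satisfies a(x,y)·C(x) = q^{-vj}·A(x)·p̂(q^m x, q^{-n} y) - B(q^{-m}x)·p̂(x,y), for integers m > 0, n, v, j ≥ 1, ℓ0. Then the highest x-degree ℓ of p̂ satisfies ℓ ≤ max{ ℓ2 + ℓ3 - ℓ1, ℓ0 - ℓ1 + ℓ2 + vj/m, ℓ0 - ℓ1 + ℓ2 + (vj + n(λ-1))/m }. -/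
open Polynomial

noncomputable section

/-- The substitution `x ↦ c·x` on `K[y][x]`. -/
noncomputable def scaleX {K : Type*} [CommRing K] (c : K)
    (P : Polynomial (Polynomial K)) : Polynomial (Polynomial K) :=
  P.comp (C (C c) * X)

/-- The substitution `y ↦ c·y` on `K[y][x]`, acting on the coefficients. -/
noncomputable def scaleY {K : Type*} [CommRing K] (c : K)
    (P : Polynomial (Polynomial K)) : Polynomial (Polynomial K) :=
  P.map ((aeval (C c * X) : Polynomial K →ₐ[K] Polynomial K).toRingHom)

/-- The embedding `K[x] → K[y][x]`. -/
noncomputable def ux {K : Type*} [CommRing K] : Polynomial K →+* Polynomial (Polynomial K) :=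
  Polynomial.mapRingHom (C : K →+* Polynomial K)

lemma coeff_comp_C_mul_X {R : Type*} [CommRing R] (p : R[X]) (u : R) (k : ℕ) :
    (p.comp (C u * X)).coeff k = u ^ k * p.coeff k := by
  rw [comp, eval₂_eq_sum, sum_def, finset_sum_coeff]
  simp only [mul_pow, ← C_pow, coeff_C_mul, coeff_X_pow, mul_ite, mul_one, mul_zero]
  rw [Finset.sum_ite_eq p.support k (fun i => p.coeff i * u ^ i)]
  by_cases h : k ∈ p.support
  · simp [h, mul_comm]
  · simp [h, Polynomial.notMem_support_iff.mp h]

lemma coeff_scaleX {K : Type*} [CommRing K] (c : K) (P : Polynomial (Polynomial K)) (i : ℕ) :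
    (scaleX c P).coeff i = C (c ^ i) * P.coeff i := by
  rw [scaleX, coeff_comp_C_mul_X, ← C_pow]

lemma coeff_scaleY {K : Type*} [CommRing K] (c : K) (P : Polynomial (Polynomial K)) (i : ℕ) :
    (scaleY c P).coeff i = aeval (C c * X) (P.coeff i) :=
  coeff_map _ _

lemma aeval_C_mul_X_coeff {K : Type*} [CommRing K] (c : K) (p : Polynomial K) (k : ℕ) :
    (aeval (C c * X) p).coeff k = c ^ k * p.coeff k := by
  have h : (aeval (C c * X) p : Polynomial K) = p.comp (C c * X) := by
    rw [aeval_def, comp, Polynomial.algebraMap_eq]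
  rw [h, coeff_comp_C_mul_X]

lemma coeff_ux {K : Type*} [CommRing K] (f : Polynomial K) (i : ℕ) :
    (ux f).coeff i = C (f.coeff i) := coeff_map _ _

theorem stmt15 {K : Type*} [Field K] [CharZero K] (q : K) (hq : q ≠ 0)
    (hroot : ∀ ℓ : ℤ, ℓ ≠ 0 → q ^ ℓ ≠ 1)
    (m : ℕ) (hm : 0 < m) (n v : ℤ) (j : ℕ) (hj : 1 ≤ j)
    (A B Cc : Polynomial K) (hA : A ≠ 0) (hB : B ≠ 0) (hC : Cc ≠ 0)
    (ℓ1 ℓ2 ℓ3 lam : ℕ) (ℓ0 : ℤ) (hlam : 1 ≤ lam)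
    (hdA : A.natDegree = ℓ1) (hdB : B.natDegree = ℓ1) (hdC : Cc.natDegree = ℓ2)
    (hlc : B.leadingCoeff = A.leadingCoeff * q ^ ((m : ℤ) * (ℓ0 + (ℓ2 : ℤ))))
    (a : Polynomial (Polynomial K)) (hda : a.natDegree = ℓ3)
    (hay : ∀ i, (a.coeff i).degree < (lam : WithBot ℕ))
    (P : Polynomial (Polynomial K)) (hP : P ≠ 0) (N : ℕ)
    (hPy : ∀ i, (P.coeff i).degree < (lam : WithBot ℕ))
    (heq : ux Cc * a * X ^ N =
        C (C (q ^ (-(v * (j : ℤ)) - (m : ℤ) * (N : ℤ)))) * ux A *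
            scaleY (q ^ (-n)) (scaleX (q ^ m) P) -
          scaleX (q ^ (-(m : ℤ))) (ux B) * P) :
    (P.natDegree : ℚ) - (N : ℚ) ≤
      max (max ((ℓ2 : ℚ) + (ℓ3 : ℚ) - (ℓ1 : ℚ))
          ((ℓ0 : ℚ) - (ℓ1 : ℚ) + (ℓ2 : ℚ) + (v : ℚ) * (j : ℚ) / (m : ℚ)))
        ((ℓ0 : ℚ) - (ℓ1 : ℚ) + (ℓ2 : ℚ) +
          ((v : ℚ) * (j : ℚ) + (n : ℚ) * ((lam : ℚ) - 1)) / (m : ℚ)) := by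
  set ℓ := P.natDegree with hℓ
  by_cases hcase : ℓ1 + ℓ ≤ ℓ2 + ℓ3 + N
  · refine le_trans ?_ (le_trans (le_max_left _ _) (le_max_left _ _))
    have h : (ℓ1:ℚ) + ℓ ≤ (ℓ2:ℚ) + ℓ3 + N := by exact_mod_cast hcase
    linarith
  push_neg at hcase
  set d := ℓ1 + ℓ with hd
  -- LHS coefficient at d is 0
  have hL : (ux Cc * a * X ^ N).coeff d = 0 := by
    apply coeff_eq_zero_of_natDegree_lt
    calc (ux Cc * a * X ^ N).natDegree
        ≤ (ux Cc * a).natDegree + (X ^ N : Polynomial (Polynomial K)).natDegree :=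
          natDegree_mul_le
      _ ≤ (ux Cc).natDegree + a.natDegree + N := by
          rw [natDegree_X_pow]; exact Nat.add_le_add_right natDegree_mul_le N
      _ ≤ ℓ2 + ℓ3 + N := by
          have h1 : (ux Cc).natDegree ≤ ℓ2 := hdC ▸ natDegree_map_le
          omega
      _ < d := hcase
  set Q := scaleY (q ^ (-n)) (scaleX (q ^ m) P) with hQ
  have hQle : Q.natDegree ≤ ℓ := by
    apply natDegree_le_iff_coeff_eq_zero.mpr
    intro i hi
    rw [hQ, coeff_scaleY, coeff_scaleX, coeff_eq_zero_of_natDegree_lt hi]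
    simp
  have h1le : (C (C (q ^ (-(v * (j : ℤ)) - (m : ℤ) * (N : ℤ)))) * ux A).natDegree ≤ ℓ1 := by
    refine le_trans natDegree_mul_le ?_
    rw [natDegree_C]
    simpa using hdA ▸ (natDegree_map_le : (ux A).natDegree ≤ A.natDegree)
  have h2le : (scaleX (q ^ (-(m:ℤ))) (ux B)).natDegree ≤ ℓ1 := by
    apply natDegree_le_iff_coeff_eq_zero.mpr
    intro i hi
    rw [coeff_scaleX, coeff_ux, coeff_eq_zero_of_natDegree_lt (hdB ▸ hi)]
    simp
  have hc := congrArg (fun p => p.coeff d) heq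
  simp only [coeff_sub] at hc
  rw [hL, hd, coeff_mul_add_eq_of_natDegree_le h1le hQle,
      coeff_mul_add_eq_of_natDegree_le h2le (le_refl ℓ)] at hc
  -- compute individual coefficients
  rw [coeff_C_mul, coeff_ux, coeff_scaleX, coeff_ux] at hc
  rw [hQ, coeff_scaleY, coeff_scaleX, map_mul, aeval_C, Polynomial.algebraMap_eq] at hc
  -- extract the coefficient of y^k
  have hpl0 : P.coeff ℓ ≠ 0 := by
    rw [hℓ, ← leadingCoeff]; exact leadingCoeff_ne_zero.mpr hP
  set k := (P.coeff ℓ).natDegree with hk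
  have hck : (P.coeff ℓ).coeff k ≠ 0 := by
    rw [hk, ← leadingCoeff]; exact leadingCoeff_ne_zero.mpr hpl0
  have hc2 := congrArg (fun p => p.coeff k) hc
  simp only [coeff_sub, coeff_C_mul, aeval_C_mul_X_coeff, coeff_zero, mul_assoc] at hc2
  rw [show A.coeff ℓ1 = A.leadingCoeff from by rw [← hdA]; rfl,
      show B.coeff ℓ1 = B.leadingCoeff from by rw [← hdB]; rfl, hlc,
      show ((q ^ m) ^ ℓ : K) = q ^ ((m:ℤ) * (ℓ:ℤ)) from by
        rw [← pow_mul, ← zpow_natCast q (m * ℓ)]; norm_cast,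
      show ((q ^ (-n)) ^ k : K) = q ^ ((-n) * (k:ℤ)) from by
        rw [← zpow_natCast (q ^ (-n)) k, ← zpow_mul],
      show ((q ^ (-(m:ℤ))) ^ ℓ1 : K) = q ^ ((-(m:ℤ)) * (ℓ1:ℤ)) from by
        rw [← zpow_natCast (q ^ (-(m:ℤ))) ℓ1, ← zpow_mul]] at hc2
  have ha0 : A.leadingCoeff ≠ 0 := leadingCoeff_ne_zero.mpr hA
  set c0 : K := (P.coeff ℓ).coeff k with hc0
  have h12 : q ^ ((-(v * (j:ℤ)) - (m:ℤ) * (N:ℤ)) + (m:ℤ) * (ℓ:ℤ) + (-n) * (k:ℤ)) *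
      (A.leadingCoeff * c0) =
      q ^ ((-(m:ℤ)) * (ℓ1:ℤ) + (m:ℤ) * (ℓ0 + (ℓ2:ℤ))) * (A.leadingCoeff * c0) := by
    rw [zpow_add₀ hq, zpow_add₀ hq, zpow_add₀ hq]
    linear_combination -hc2
  have hq12 := mul_right_cancel₀ (mul_ne_zero ha0 hck) h12
  have hE : (-(v * (j:ℤ)) - (m:ℤ) * (N:ℤ)) + (m:ℤ) * (ℓ:ℤ) + (-n) * (k:ℤ) =
      (-(m:ℤ)) * (ℓ1:ℤ) + (m:ℤ) * (ℓ0 + (ℓ2:ℤ)) := by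
    by_contra hne
    exact hroot _ (sub_ne_zero.mpr hne)
      (by rw [zpow_sub₀ hq, hq12, div_self (zpow_ne_zero _ hq)])
  -- final rational arithmetic
  have hmQ : (0:ℚ) < (m:ℚ) := by exact_mod_cast hm
  have hEQ : -((v:ℚ) * j) - m * N + m * ℓ + (-(n:ℚ)) * k =
      -(m:ℚ) * ℓ1 + m * ((ℓ0:ℚ) + ℓ2) := by exact_mod_cast hE
  have key : (ℓ:ℚ) - N = (ℓ0:ℚ) - ℓ1 + ℓ2 + ((v:ℚ) * j + n * k) / m := by
    field_simp
    ring_nf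
    ring_nf at hEQ
    linarith
  have hklt : k < lam := by
    rw [hk]
    exact (natDegree_lt_iff_degree_lt hpl0).mpr (hPy ℓ)
  have hkQ : (k:ℚ) ≤ (lam:ℚ) - 1 := by
    have : (k:ℚ) + 1 ≤ (lam:ℚ) := by exact_mod_cast hklt
    linarith
  have hk0 : (0:ℚ) ≤ (k:ℚ) := by positivity
  rcases le_or_gt 0 n with hn | hn
  · refine le_trans ?_ (le_max_right _ _)
    have hn' : (0:ℚ) ≤ (n:ℚ) := by exact_mod_cast hn
    have hnk : (n:ℚ) * k ≤ (n:ℚ) * ((lam:ℚ) - 1) := mul_le_mul_of_nonneg_left hkQ hn'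
    have hdiv : ((v:ℚ) * j + n * k) / m ≤ ((v:ℚ) * j + n * ((lam:ℚ) - 1)) / m :=
      (div_le_div_iff_of_pos_right hmQ).mpr (by linarith)
    rw [key]; linarith
  · refine le_trans ?_ (le_trans (le_max_right _ _) (le_max_left _ _))
    have hn' : (n:ℚ) ≤ 0 := by exact_mod_cast hn.le
    have hnk : (n:ℚ) * k ≤ 0 := mul_nonpos_of_nonpos_of_nonneg hn' hk0
    have hdiv : ((v:ℚ) * j + n * k) / m ≤ ((v:ℚ) * j) / m :=
      (div_le_div_iff_of_pos_right hmQ).mpr (by linarith)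
    rw [key]; linarith
end
end
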